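/- Let F be the intermediate firing configuration with 2^n initial chips. Suppose the leftmost nonzero entry of row i is F(x,y) = 1 and the next entry satisfies 4 ≤ F(x-1,y+1) ≤ 7. Then the leftmost nonzero entry of row i+2 is F(x+1,y+1) = 1; in particular, rows i and i+2 have the same number of nonzero entries. -/
import Mathlib

private lemma aux_sym (F : ℤ → ℤ → ℕ)
    (hneg : ∀ x y : ℤ, x < 0 ∨ y < 0 → F x y = 0)
    (hrec : ∀ x y : ℤ, 0 ≤ x → 0 ≤ y → ¬(x = 0 ∧ y = 0) →
      F x y = F (x - 1) y / 2 + F x (y - 1) / 2) :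
    ∀ x y : ℤ, F x y = F y x := by
  have key : ∀ s : ℕ, ∀ x y : ℤ, 0 ≤ x → 0 ≤ y → x + y = s → F x y = F y x := by
    intro s
    induction s with
    | zero =>
      intro x y hx hy hs
      have hx0 : x = 0 := by omega
      have hy0 : y = 0 := by omega
      rw [hx0, hy0]
    | succ s ih =>
      intro x y hx hy hs
      have hns : ¬(x = 0 ∧ y = 0) := by omega
      have hns' : ¬(y = 0 ∧ x = 0) := by omega
      rw [hrec x y hx hy hns, hrec y x hy hx hns']
      have h1 : F (x - 1) y = F y (x - 1) := by
        rcases lt_or_ge (x - 1) 0 with h | h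
        · rw [hneg _ _ (Or.inl h), hneg _ _ (Or.inr h)]
        · exact ih (x - 1) y h hy (by omega)
      have h2 : F x (y - 1) = F (y - 1) x := by
        rcases lt_or_ge (y - 1) 0 with h | h
        · rw [hneg _ _ (Or.inr h), hneg _ _ (Or.inl h)]
        · exact ih x (y - 1) hx h (by omega)
      rw [h1, h2]
      omega
  intro x y
  rcases lt_or_ge x 0 with h | hx
  · rw [hneg _ _ (Or.inl h), hneg _ _ (Or.inr h)]
  rcases lt_or_ge y 0 with h | hy
  · rw [hneg _ _ (Or.inr h), hneg _ _ (Or.inl h)]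
  exact key (x + y).toNat x y hx hy (by omega)

private lemma aux_mono (F : ℤ → ℤ → ℕ)
    (hneg : ∀ x y : ℤ, x < 0 ∨ y < 0 → F x y = 0)
    (hrec : ∀ x y : ℤ, 0 ≤ x → 0 ≤ y → ¬(x = 0 ∧ y = 0) →
      F x y = F (x - 1) y / 2 + F x (y - 1) / 2) :
    ∀ x y : ℤ, 0 ≤ y → y < x → F x y ≤ F (x - 1) (y + 1) := by
  have hsym := aux_sym F hneg hrec
  have key : ∀ s : ℕ, ∀ x y : ℤ, 0 ≤ y → y < x → x + y = s →
      F x y ≤ F (x - 1) (y + 1) := by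
    intro s
    induction s with
    | zero => intro x y hy hlt hs; exfalso; omega
    | succ s ih =>
      intro x y hy hlt hs
      rcases eq_or_lt_of_le (by omega : y + 1 ≤ x) with heq | hgt
      · rw [← heq, show y + 1 - 1 = y by ring]
        exact le_of_eq (hsym _ _)
      · have e1 := hrec x y (by omega) hy (by omega)
        have e2 := hrec (x - 1) (y + 1) (by omega) (by omega) (by omega)
        rw [show x - 1 - 1 = x - 2 by ring, show y + 1 - 1 = y by ring] at e2
        have hmid : F x (y - 1) ≤ F (x - 2) (y + 1) := by
          rcases eq_or_lt_of_le hy with h0 | h0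
          · rw [hneg x (y - 1) (Or.inr (by omega))]
            exact Nat.zero_le _
          · have ha1 : F x (y - 1) ≤ F (x - 1) (y - 1 + 1) :=
              ih x (y - 1) (by omega) (by omega) (by omega)
            have ha2 : F (x - 1) y ≤ F (x - 1 - 1) (y + 1) :=
              ih (x - 1) y hy (by omega) (by omega)
            rw [show y - 1 + 1 = y by ring] at ha1
            rw [show x - 1 - 1 = x - 2 by ring] at ha2
            exact ha1.trans ha2
        rw [e1, e2]
        have := Nat.div_le_div_right (c := 2) hmid
        omega
  intro x y hy hlt
  exact key (x + y).toNat x y hy hlt (by omega)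

private lemma aux_col (n : ℕ) (F : ℤ → ℤ → ℕ)
    (hneg : ∀ x y : ℤ, x < 0 ∨ y < 0 → F x y = 0)
    (hzero : F 0 0 = 2 ^ n)
    (hrec : ∀ x y : ℤ, 0 ≤ x → 0 ≤ y → ¬(x = 0 ∧ y = 0) →
      F x y = F (x - 1) y / 2 + F x (y - 1) / 2) :
    ∀ k : ℕ, F (k : ℤ) 0 = 2 ^ n / 2 ^ k := by
  intro k
  induction k with
  | zero => simpa using hzero
  | succ k ih =>
    have e := hrec ((k : ℤ) + 1) 0 (by omega) le_rfl (by omega)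
    rw [show (k : ℤ) + 1 - 1 = (k : ℤ) by ring] at e
    rw [hneg ((k : ℤ) + 1) (0 - 1) (Or.inr (by norm_num))] at e
    rw [ih] at e
    have : ((k + 1 : ℕ) : ℤ) = (k : ℤ) + 1 := by push_cast; ring
    rw [this, e, Nat.div_div_eq_div_mul, pow_succ]
    simp

theorem stmt6 (n i : ℕ) (F : ℤ → ℤ → ℕ)
    (hneg : ∀ x y : ℤ, x < 0 ∨ y < 0 → F x y = 0)
    (hzero : F 0 0 = 2 ^ n)
    (hrec : ∀ x y : ℤ, 0 ≤ x → 0 ≤ y → ¬(x = 0 ∧ y = 0) →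
      F x y = F (x - 1) y / 2 + F x (y - 1) / 2)
    (x y : ℤ) (h0y : 0 ≤ y) (hxy : x + y = (i : ℤ))
    (hone : F x y = 1)
    (hleftmost : ∀ x' y' : ℤ, x' + y' = (i : ℤ) → y' < y → F x' y' = 0)
    (ha : 4 ≤ F (x - 1) (y + 1)) (hb : F (x - 1) (y + 1) ≤ 7) :
    F (x + 1) (y + 1) = 1 ∧
    (∀ x' y' : ℤ, x' + y' = (i : ℤ) + 2 → y' < y + 1 → F x' y' = 0) ∧
    ((Finset.range (i + 1)).filter
        (fun a : ℕ => F (a : ℤ) ((i : ℤ) - a) ≠ 0)).card =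
      ((Finset.range (i + 3)).filter
        (fun a : ℕ => F (a : ℤ) ((i : ℤ) + 2 - a) ≠ 0)).card := by
  have hsym := aux_sym F hneg hrec
  have hmono := aux_mono F hneg hrec
  have hcol := aux_col n F hneg hzero hrec
  have hx0 : 0 ≤ x := by
    by_contra h
    rw [hneg x y (Or.inl (by omega))] at hone
    exact absurd hone one_ne_zero.symm
  have hxi : x ≤ (i : ℤ) := by omega
  -- y ≤ x
  have hyx : y ≤ x := by
    by_contra h
    have h1 : F y x = 0 := hleftmost y x (by omega) (by omega)
    rw [hsym x y, h1] at hone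
    exact absurd hone one_ne_zero.symm
  -- Row i+1 zeros
  have Z1 : ∀ x' y' : ℤ, x' + y' = (i : ℤ) + 1 → y' ≤ y → F x' y' = 0 := by
    intro x' y' hs hy'
    rcases lt_or_ge x' 0 with h | hx'
    · exact hneg _ _ (Or.inl h)
    rcases lt_or_ge y' 0 with h | hy0'
    · exact hneg _ _ (Or.inr h)
    have e := hrec x' y' hx' hy0' (by omega)
    have p2 : F x' (y' - 1) = 0 := hleftmost x' (y' - 1) (by omega) (by omega)
    rcases eq_or_lt_of_le hy' with hyy | hyy
    · have hx1 : x' - 1 = x := by omega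
      rw [hyy] at e p2 ⊢
      rw [hx1, hone, p2] at e
      omega
    · have p1 : F (x' - 1) y' = 0 := hleftmost (x' - 1) y' (by omega) hyy
      rw [p1, p2] at e
      omega
  -- Row i+2 zeros (second conjunct)
  have Z2 : ∀ x' y' : ℤ, x' + y' = (i : ℤ) + 2 → y' < y + 1 → F x' y' = 0 := by
    intro x' y' hs hy'
    rcases lt_or_ge x' 0 with h | hx'
    · exact hneg _ _ (Or.inl h)
    rcases lt_or_ge y' 0 with h | hy0'
    · exact hneg _ _ (Or.inr h)
    have e := hrec x' y' hx' hy0' (by omega)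
    have p1 : F (x' - 1) y' = 0 := Z1 (x' - 1) y' (by omega) (by omega)
    have p2 : F x' (y' - 1) = 0 := Z1 x' (y' - 1) (by omega) (by omega)
    rw [p1, p2] at e
    omega
  -- First conjunct
  have h1 : F (x + 1) (y + 1) = 1 := by
    have e1 := hrec x (y + 1) hx0 (by omega) (by omega)
    rw [show y + 1 - 1 = y by ring, hone] at e1
    have e2 : F (x + 1) y = 0 := Z1 (x + 1) y (by omega) le_rfl
    have e3 := hrec (x + 1) (y + 1) (by omega) (by omega) (by omega)
    rw [show x + 1 - 1 = x by ring, show y + 1 - 1 = y by ring, e1, e2] at e3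
    omega
  refine ⟨h1, Z2, ?_⟩
  -- interior entries of row i are ≥ 4
  have lowR : ∀ k : ℕ, (i : ℤ) ≤ 2 * (x - 1 - k) →
      4 ≤ F (x - 1 - k) ((i : ℤ) - (x - 1 - k)) := by
    intro k
    induction k with
    | zero =>
      intro _
      rw [show x - 1 - (0 : ℕ) = x - 1 by push_cast; ring,
        show (i : ℤ) - (x - 1) = y + 1 by omega]
      exact ha
    | succ k ih =>
      intro hk
      have hk' : (x - 1 - ((k + 1 : ℕ) : ℤ)) = x - 2 - k := by push_cast; ring
      rw [hk']
      rw [hk'] at hk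
      have ihv := ih (by omega)
      have hm := hmono (x - 2 - k + 1) ((i : ℤ) - (x - 2 - k) - 1) (by omega) (by omega)
      rw [show x - 2 - k + 1 - 1 = x - 2 - (k : ℤ) by ring,
        show (i : ℤ) - (x - 2 - k) - 1 + 1 = (i : ℤ) - (x - 2 - k) by ring] at hm
      have : F (x - 1 - k) ((i : ℤ) - (x - 1 - k)) =
          F (x - 2 - k + 1) ((i : ℤ) - (x - 2 - k) - 1) := by
        rw [show x - 2 - (k : ℤ) + 1 = x - 1 - k by ring,
          show (i : ℤ) - (x - 2 - k) - 1 = (i : ℤ) - (x - 1 - k) by ring]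
      rw [this] at ihv
      exact ihv.trans hm
  have lowHalf : ∀ a : ℤ, (i : ℤ) ≤ 2 * a → a < x → 4 ≤ F a ((i : ℤ) - a) := by
    intro a h2a hax
    have hA := lowR (x - 1 - a).toNat (by omega)
    rw [show x - 1 - ((x - 1 - a).toNat : ℤ) = a by omega] at hA
    exact hA
  have low : ∀ a : ℤ, y < a → a < x → 4 ≤ F a ((i : ℤ) - a) := by
    intro a hya hax
    rcases le_or_gt (i : ℤ) (2 * a) with h | h
    · exact lowHalf a h hax
    · have hB := lowHalf ((i : ℤ) - a) (by omega) (by omega)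
      rw [show (i : ℤ) - ((i : ℤ) - a) = a by ring] at hB
      rw [hsym]
      exact hB
  -- interior entries of row i+2 are nonzero
  have Hpos : ∀ a : ℤ, y < a → a < x → F (a + 1) ((i : ℤ) + 1 - a) ≠ 0 := by
    intro a hya hax
    have h4 := low a hya hax
    have eK := hrec a ((i : ℤ) + 1 - a) (by omega) (by omega) (by omega)
    rw [show (i : ℤ) + 1 - a - 1 = (i : ℤ) - a by ring] at eK
    have eH := hrec (a + 1) ((i : ℤ) + 1 - a) (by omega) (by omega) (by omega)
    rw [show a + 1 - 1 = a by ring,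
      show (i : ℤ) + 1 - a - 1 = (i : ℤ) - a by ring] at eH
    omega
  -- i ≥ n  (needed to show F(0,i+2)=0)
  have hni : n ≤ i := by
    have hc := hcol i
    have hle : 2 ^ n / 2 ^ i ≤ 1 := by
      rcases eq_or_lt_of_le h0y with hy0 | hy0
      · have hxeq : x = (i : ℤ) := by omega
        rw [hxeq, ← hy0] at hone
        omega
      · have := hleftmost (i : ℤ) 0 (by omega) hy0
        omega
    by_contra h
    rw [Nat.pow_div (by omega) (by norm_num)] at hle
    have : 2 ^ 1 ≤ 2 ^ (n - i) := Nat.pow_le_pow_right (by norm_num) (by omega)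
    omega
  have hzero_top : F 0 ((i : ℤ) + 2) = 0 := by
    have hc := hcol (i + 2)
    rw [Nat.div_eq_of_lt (Nat.pow_lt_pow_right one_lt_two (by omega))] at hc
    rw [hsym]
    have : ((i + 2 : ℕ) : ℤ) = (i : ℤ) + 2 := by push_cast; ring
    rw [← this]
    exact hc
  -- the bijection a ↦ a + 1
  apply Finset.card_bij (fun (a : ℕ) _ => a + 1)
  · -- maps to
    intro a haA
    rw [Finset.mem_filter, Finset.mem_range] at haA ⊢
    obtain ⟨har, hFa⟩ := haA
    refine ⟨by omega, ?_⟩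
    have hya : y ≤ (a : ℤ) := by
      by_contra h
      have := hleftmost ((i : ℤ) - a) a (by ring) (by omega)
      rw [hsym] at hFa
      exact hFa this
    have hax : (a : ℤ) ≤ x := by
      by_contra h
      exact hFa (hleftmost a ((i : ℤ) - a) (by ring) (by omega))
    have hcast : ((a + 1 : ℕ) : ℤ) = (a : ℤ) + 1 := by push_cast; ring
    rw [hcast, show (i : ℤ) + 2 - ((a : ℤ) + 1) = (i : ℤ) + 1 - a by ring]
    rcases eq_or_lt_of_le hax with haxe | haxl
    · rw [haxe, show (i : ℤ) + 1 - x = y + 1 by omega, h1]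
      exact one_ne_zero
    rcases eq_or_lt_of_le hya with hyae | hyal
    · rw [← hyae, show (i : ℤ) + 1 - y = x + 1 by omega, hsym, h1]
      exact one_ne_zero
    · exact Hpos a hyal haxl
  · intro a₁ _ a₂ _ h
    omega
  · -- surjective
    intro b hbB
    rw [Finset.mem_filter, Finset.mem_range] at hbB
    obtain ⟨hbr, hFb⟩ := hbB
    have hb1 : 1 ≤ b := by
      by_contra h
      have hb0 : b = 0 := by omega
      rw [hb0] at hFb
      exact hFb (by simpa using hzero_top)
    have hbx : (b : ℤ) ≤ x + 1 := by
      by_contra h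
      exact hFb (Z2 b ((i : ℤ) + 2 - b) (by ring) (by omega))
    have hby : y + 1 ≤ (b : ℤ) := by
      by_contra h
      have := Z2 ((i : ℤ) + 2 - b) b (by ring) (by omega)
      rw [hsym] at hFb
      exact hFb this
    refine ⟨b - 1, ?_, by omega⟩
    rw [Finset.mem_filter, Finset.mem_range]
    have hcast : ((b - 1 : ℕ) : ℤ) = (b : ℤ) - 1 := by omega
    constructor
    · omega
    · rw [hcast]
      rcases eq_or_lt_of_le hbx with he | hl
      · rw [show (b : ℤ) - 1 = x by omega, show (i : ℤ) - x = y by omega, hone]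
        exact one_ne_zero
      rcases eq_or_lt_of_le hby with he | hl2
      · rw [show (b : ℤ) - 1 = y by omega, show (i : ℤ) - y = x by omega, hsym, hone]
        exact one_ne_zero
      · have := low ((b : ℤ) - 1) (by omega) (by omega)
        omega
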